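/- For any graph G and any integer m ≥ Z(G), the positive semidefinite m-propagation time satisfies pt₊(G,m) ≤ ⌈pt(G,m)/2⌉. -/

import Mathlib

namespace ZF

variable {V : Type*} [Fintype V] [DecidableEq V]

/-- A valid standard zero forcing force within the vertex set `U`, given blue set `B`:
`u` is blue, `v` is its unique white neighbor in `U`. -/
def ZFValid (G : SimpleGraph V) (U B : Set V) (u v : V) : Prop :=
  u ∈ U ∧ v ∈ U ∧ u ∈ B ∧ v ∉ B ∧ G.Adj u v ∧
    ∀ w ∈ U, G.Adj u w → w ∉ B → w = v

/-- `whiteConn G U B a b` : `a` and `b` are joined by a walk through white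
(non-blue) vertices of `U` (possibly trivial). -/
def whiteConn (G : SimpleGraph V) (U B : Set V) : V → V → Prop :=
  Relation.ReflTransGen (fun a b => G.Adj a b ∧ a ∈ U ∧ b ∈ U ∧ a ∉ B ∧ b ∉ B)

/-- A valid PSD force within the vertex set `U`, given blue set `B`:
`u` is blue and `v` is the unique neighbor of `u` in the component of the
white subgraph containing `v`. -/
def PSDValid (G : SimpleGraph V) (U B : Set V) (u v : V) : Prop :=
  u ∈ U ∧ v ∈ U ∧ u ∈ B ∧ v ∉ B ∧ G.Adj u v ∧
    ∀ w ∈ U, G.Adj u w → w ∉ B → whiteConn G U B v w → w = v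

/-- One propagation step for a generic color change rule `valid`. -/
def step (valid : Set V → V → V → Prop) (B : Set V) : Set V :=
  B ∪ {v | ∃ u, valid B u v}

/-- Iterated propagation. -/
def iter (valid : Set V → V → V → Prop) (B : Set V) : ℕ → Set V :=
  fun k => (step valid)^[k] B

/-- `B ⊆ U` is a forcing set of the induced subgraph on `U` for the rule `valid`. -/
def IsForcingSet (valid : Set V → V → V → Prop) (U B : Set V) : Prop :=
  B ⊆ U ∧ ∃ k, U ⊆ iter valid B k

/-- Propagation time of the set `B` for rule `valid` on the induced subgraph on `U`. -/
noncomputable def propTime (valid : Set V → V → V → Prop) (U B : Set V) : ℕ :=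
  sInf {k | U ⊆ iter valid B k}

/-- Vertices blue after `k` time-steps of the family of forces `F`, starting from `B`. -/
def expand (B : Set V) (F : ℕ → Set (V × V)) : ℕ → Set V
  | 0 => B
  | k + 1 => expand B F k ∪ {v | ∃ u, (u, v) ∈ F (k + 1)}

/-- A relaxed chronology of forces (for the rule `valid`) for the forcing set `B`
on the induced subgraph on `U`, with completion time `K`: at each time-step an
arbitrary subset of the currently valid forces is performed (no vertex being
forced twice in one step), and all of `U` is blue after step `K`. -/
structure RelaxedChron (valid : Set V → V → V → Prop) (U B : Set V)
    (K : ℕ) (F : ℕ → Set (V × V)) : Prop where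
  subset : B ⊆ U
  init : F 0 = ∅
  bound : ∀ k, K < k → F k = ∅
  forcesValid : ∀ k < K, ∀ u v, (u, v) ∈ F (k + 1) → valid (expand B F k) u v
  uniqueForcer : ∀ k u₁ u₂ v, (u₁, v) ∈ F k → (u₂, v) ∈ F k → u₁ = u₂
  complete : U ⊆ expand B F K

/-- The underlying set of forces of a relaxed chronology. -/
def forcesOf (F : ℕ → Set (V × V)) (K : ℕ) : Set (V × V) :=
  {p | ∃ k, 1 ≤ k ∧ k ≤ K ∧ p ∈ F k}

/-- The terminus of a relaxed chronology: the vertices (of `U`) performing no force. -/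
def terminus (U : Set V) (F : ℕ → Set (V × V)) (K : ℕ) : Set V :=
  {v ∈ U | ∀ u, (v, u) ∉ forcesOf F K}

/-- The reversal of a relaxed chronology: each force is reversed and
the order of the time-steps is reversed. -/
def revChron (F : ℕ → Set (V × V)) (K : ℕ) : ℕ → Set (V × V) :=
  fun k => if 1 ≤ k ∧ k ≤ K then {p | (p.2, p.1) ∈ F (K - k + 1)} else ∅

/-- One round of performing all currently valid forces from the set of forces `S`. -/
def forceStep (valid : Set V → V → V → Prop) (S : Set (V × V)) (B : Set V) : Set V :=
  B ∪ {v | ∃ u, (u, v) ∈ S ∧ valid B u v}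

def forceIter (valid : Set V → V → V → Prop) (S : Set (V × V)) (B : Set V) : ℕ → Set V :=
  fun t => (forceStep valid S)^[t] B

/-- Propagation time of a set of forces `S` for starting set `B` on `U`. -/
noncomputable def ptForces (valid : Set V → V → V → Prop) (U : Set V)
    (S : Set (V × V)) (B : Set V) : ℕ :=
  sInf {t | U ⊆ forceIter valid S B t}

/-- `v` is active at time-step `k` of the relaxed chronology `F`:
it is blue after step `k` and has not yet performed a force. -/
def activeAt (B : Set V) (F : ℕ → Set (V × V)) (v : V) (k : ℕ) : Prop :=
  v ∈ expand B F k ∧ ∀ j ≤ k, ∀ u, (v, u) ∉ F j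

/-- The zero forcing number. -/
noncomputable def Z (G : SimpleGraph V) : ℕ :=
  sInf {n | ∃ B : Set V, B.ncard = n ∧ IsForcingSet (ZFValid G Set.univ) Set.univ B}

/-- The PSD forcing number. -/
noncomputable def Zplus (G : SimpleGraph V) : ℕ :=
  sInf {n | ∃ B : Set V, B.ncard = n ∧ IsForcingSet (PSDValid G Set.univ) Set.univ B}

/-- Standard `m`-propagation time `pt(G,m)`. -/
noncomputable def ptm (G : SimpleGraph V) (m : ℕ) : ℕ :=
  sInf {t | ∃ B : Set V, B.ncard = m ∧ IsForcingSet (ZFValid G Set.univ) Set.univ B ∧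
    propTime (ZFValid G Set.univ) Set.univ B = t}

/-- PSD `m`-propagation time `pt₊(G,m)`. -/
noncomputable def ptplusm (G : SimpleGraph V) (m : ℕ) : ℕ :=
  sInf {t | ∃ B : Set V, B.ncard = m ∧ IsForcingSet (PSDValid G Set.univ) Set.univ B ∧
    propTime (PSDValid G Set.univ) Set.univ B = t}

/-- Standard propagation time `pt(G)`. -/
noncomputable def pt (G : SimpleGraph V) : ℕ := ptm G (Z G)

/-- PSD propagation time `pt₊(G)`. -/
noncomputable def ptplus (G : SimpleGraph V) : ℕ := ptplusm G (Zplus G)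

/-- PSD throttling number `thr₊(G)`. -/
noncomputable def thrplus (G : SimpleGraph V) : ℕ :=
  sInf {t | ∃ B : Set V, IsForcingSet (PSDValid G Set.univ) Set.univ B ∧
    t = B.ncard + propTime (PSDValid G Set.univ) Set.univ B}

/-- Closed neighborhood of a set. -/
def closedNbhd (G : SimpleGraph V) (B : Set V) : Set V :=
  B ∪ {v | ∃ u ∈ B, G.Adj u v}

/-- Power domination process: the first step colors the closed neighborhood,
subsequent steps apply the standard zero forcing rule. -/
def pdIter (G : SimpleGraph V) (B : Set V) : ℕ → Set V
  | 0 => B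
  | 1 => closedNbhd G B
  | (k + 2) => step (ZFValid G Set.univ) (pdIter G B (k + 1))

/-- `B` is a power dominating set. -/
def IsPDSet (G : SimpleGraph V) (B : Set V) : Prop :=
  ∃ k, Set.univ ⊆ pdIter G B k

/-- Power propagation time of a set. -/
noncomputable def pdPropTime (G : SimpleGraph V) (B : Set V) : ℕ :=
  sInf {k | Set.univ ⊆ pdIter G B k}

/-- Power `m`-propagation time `ppt(G,m)`. -/
noncomputable def pptm (G : SimpleGraph V) (m : ℕ) : ℕ :=
  sInf {t | ∃ B : Set V, B.ncard = m ∧ IsPDSet G B ∧ pdPropTime G B = t}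

/-- Restriction of a family of forces to those with both endpoints in `W`. -/
def restrictF (F : ℕ → Set (V × V)) (W : Set V) : ℕ → Set (V × V) :=
  fun k => {p ∈ F k | p.1 ∈ W ∧ p.2 ∈ W}

/-- The forcing tree of `b` : all vertices reachable from `b` by a chain of forces in `S`. -/
def treeOf (S : Set (V × V)) (b : V) : Set V :=
  {w | Relation.ReflTransGen (fun a c => (a, c) ∈ S) b w}

open Classical in
/-- The endpoint, after `k` steps, of the path grown from `b ∈ B` in the
path bundle of the relaxed chronology `F` induced by the vertex `x`: the path is
extended by a force from its current endpoint into the component of white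
vertices containing `x`, whenever such a force occurs. -/
noncomputable def lastVert (G : SimpleGraph V) (B : Set V) (F : ℕ → Set (V × V))
    (x : V) (b : V) : ℕ → V
  | 0 => b
  | k + 1 =>
    if h : ∃ w, (lastVert G B F x b k, w) ∈ F (k + 1) ∧ x ∉ expand B F k ∧
        whiteConn G Set.univ (expand B F k) x w
    then h.choose else lastVert G B F x b k

/-- The vertex set of the path bundle of `F` induced by `x`. -/
def bundle (G : SimpleGraph V) (B : Set V) (F : ℕ → Set (V × V)) (x : V) (K : ℕ) : Set V :=
  {v | ∃ b ∈ B, ∃ j ≤ K, lastVert G B F x b j = v}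

/-- The path of the bundle grown from `b`, as a list of vertices. -/
noncomputable def bundlePath (G : SimpleGraph V) (B : Set V) (F : ℕ → Set (V × V))
    (x : V) (K : ℕ) (b : V) : List V :=
  ((List.range (K + 1)).map (lastVert G B F x b)).dedup

/-- A nonempty path in `G`, given as a list of distinct consecutively adjacent vertices. -/
def IsPathList (G : SimpleGraph V) (l : List V) : Prop :=
  l ≠ [] ∧ l.Nodup ∧ l.Chain' G.Adj

/-- `P` is an `(α,β)`-linkage: a collection of pairwise vertex-disjoint paths,
`α` consisting of one endpoint of each path and `β` of the other endpoints. -/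
def IsLinkage (G : SimpleGraph V) (α β : Set V) (P : Set (List V)) : Prop :=
  (∀ l ∈ P, IsPathList G l) ∧
  (∀ l ∈ P, ∀ l' ∈ P, l ≠ l' → ∀ v, v ∈ l → v ∉ l') ∧
  (∀ l ∈ P, ∀ l' ∈ P, l.head? = l'.head? → l = l') ∧
  (∀ l ∈ P, ∀ l' ∈ P, l.getLast? = l'.getLast? → l = l') ∧
  α = {v | ∃ l ∈ P, l.head? = some v} ∧
  β = {v | ∃ l ∈ P, l.getLast? = some v}

/-- `P` is a rigid linkage: for some `α`, `β` it is the unique `(α,β)`-linkage in `G`. -/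
def IsRigidLinkage (G : SimpleGraph V) (P : Set (List V)) : Prop :=
  ∃ α β, IsLinkage G α β P ∧ ∀ P', IsLinkage G α β P' → P' = P

/-- A path cover of `G` : `m` vertex-disjoint induced paths covering all vertices,
the `i`-th path having vertices `vtx i 0, …, vtx i (n i − 1)` in path order. -/
structure IsPathCover (G : SimpleGraph V) (m : ℕ) (n : Fin m → ℕ)
    (vtx : (i : Fin m) → Fin (n i) → V) : Prop where
  pos : ∀ i, 0 < n i
  inj : Function.Injective (fun p : (i : Fin m) × Fin (n i) => vtx p.1 p.2)
  cover : ∀ v : V, ∃ i j, vtx i j = v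
  induced : ∀ i (j j' : Fin (n i)),
    G.Adj (vtx i j) (vtx i j') ↔ ((j : ℕ) + 1 = (j' : ℕ) ∨ (j' : ℕ) + 1 = (j : ℕ))

/-- A witness that a path cover is a parallel increasing path cover: a collection of
block partitions of `{0,…,K}`, one per path, compatible with the edges of `G`. -/
structure IsPIPWitness (G : SimpleGraph V) (m : ℕ) (n : Fin m → ℕ)
    (vtx : (i : Fin m) → Fin (n i) → V) (K : ℕ)
    (A : (i : Fin m) → Fin (n i) → Finset ℕ) : Prop where
  mem : ∀ i j, A i j ⊆ Finset.range (K + 1)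
  nonempty : ∀ i j, (A i j).Nonempty
  partition : ∀ i, ∀ x ∈ Finset.range (K + 1), ∃! j, x ∈ A i j
  mono : ∀ i (j j' : Fin (n i)), (j : ℕ) < (j' : ℕ) → ∀ x ∈ A i j, ∀ y ∈ A i j', x < y
  edge : ∀ (i i' : Fin m) j j', i ≠ i' →
    G.Adj (vtx i j) (vtx i' j') → ((A i j) ∩ (A i' j')).Nonempty

/-- A parallel increasing path cover of `G`. -/
def IsPIP (G : SimpleGraph V) (m : ℕ) (n : Fin m → ℕ)
    (vtx : (i : Fin m) → Fin (n i) → V) : Prop :=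
  IsPathCover G m n vtx ∧ ∃ K A, IsPIPWitness G m n vtx K A

/-- The path cover given by `vtx` is the chain set of the family of forces `F` :
the underlying forces are exactly the consecutive pairs along the paths. -/
def IsChainSetOf (m : ℕ) (n : Fin m → ℕ) (vtx : (i : Fin m) → Fin (n i) → V)
    (F : ℕ → Set (V × V)) (K : ℕ) : Prop :=
  ∀ u w, (u, w) ∈ forcesOf F K ↔
    ∃ (i : Fin m) (j : Fin (n i)) (j' : Fin (n i)),
      u = vtx i j ∧ w = vtx i j' ∧ (j : ℕ) + 1 = (j' : ℕ)

end ZF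

section Aux
open ZF Set

variable {V : Type*} [Fintype V] [DecidableEq V]

lemma iter_succ' (valid : Set V → V → V → Prop) (B : Set V) (k : ℕ) :
    ZF.iter valid B (k + 1) = ZF.step valid (ZF.iter valid B k) :=
  Function.iterate_succ_apply' _ _ _

lemma iter_zero' (valid : Set V → V → V → Prop) (B : Set V) :
    ZF.iter valid B 0 = B := rfl

lemma subset_step (valid : Set V → V → V → Prop) (B : Set V) :
    B ⊆ ZF.step valid B := subset_union_left

lemma iter_mono_time (valid : Set V → V → V → Prop) (B : Set V) {k l : ℕ} (h : k ≤ l) :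
    ZF.iter valid B k ⊆ ZF.iter valid B l := by
  induction l with
  | zero => simpa [Nat.le_zero.mp h] using subset_rfl
  | succ n ih =>
    rcases Nat.le_succ_iff.mp h with h' | h'
    · exact (ih h').trans (by rw [iter_succ']; exact subset_step _ _)
    · simp [h']

/-- ZF validity is monotone in the blue set (as long as the target stays white). -/
lemma zf_valid_mono {G : SimpleGraph V} {A A' : Set V} {u v : V}
    (hAA : A ⊆ A') (hv : v ∉ A') (h : ZFValid G Set.univ A u v) :
    ZFValid G Set.univ A' u v := by
  obtain ⟨hu1, hv1, hu, -, hadj, huniq⟩ := h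
  exact ⟨hu1, hv1, hAA hu, hv, hadj, fun w hw hadjw hw' => huniq w hw hadjw (fun hmem => hw' (hAA hmem))⟩

lemma zf_step_mono {G : SimpleGraph V} {A A' : Set V} (hAA : A ⊆ A') :
    ZF.step (ZFValid G Set.univ) A ⊆ ZF.step (ZFValid G Set.univ) A' := by
  rintro v (hv | ⟨u, hu⟩)
  · exact Or.inl (hAA hv)
  · by_cases hv' : v ∈ A'
    · exact Or.inl hv'
    · exact Or.inr ⟨u, zf_valid_mono hAA hv' hu⟩

lemma zf_iter_mono {G : SimpleGraph V} {A A' : Set V} (hAA : A ⊆ A') (k : ℕ) :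
    ZF.iter (ZFValid G Set.univ) A k ⊆ ZF.iter (ZFValid G Set.univ) A' k := by
  induction k with
  | zero => exact hAA
  | succ n ih => rw [iter_succ', iter_succ']; exact zf_step_mono ih

lemma whiteConn_mono {G : SimpleGraph V} {A A' : Set V} (hAA : A ⊆ A') {a b : V}
    (h : whiteConn G Set.univ A' a b) : whiteConn G Set.univ A a b :=
  Relation.ReflTransGen.mono
    (fun x y hxy => ⟨hxy.1, hxy.2.1, hxy.2.2.1, fun hx => hxy.2.2.2.1 (hAA hx), fun hy => hxy.2.2.2.2 (hAA hy)⟩) a b h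

lemma psd_valid_mono {G : SimpleGraph V} {A A' : Set V} {u v : V}
    (hAA : A ⊆ A') (hv : v ∉ A') (h : PSDValid G Set.univ A u v) :
    PSDValid G Set.univ A' u v := by
  obtain ⟨hu1, hv1, hu, -, hadj, huniq⟩ := h
  exact ⟨hu1, hv1, hAA hu, hv, hadj, fun w hw hadjw hw' hconn =>
    huniq w hw hadjw (fun hmem => hw' (hAA hmem)) (whiteConn_mono hAA hconn)⟩

lemma psd_step_mono {G : SimpleGraph V} {A A' : Set V} (hAA : A ⊆ A') :
    ZF.step (PSDValid G Set.univ) A ⊆ ZF.step (PSDValid G Set.univ) A' := by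
  rintro v (hv | ⟨u, hu⟩)
  · exact Or.inl (hAA hv)
  · by_cases hv' : v ∈ A'
    · exact Or.inl hv'
    · exact Or.inr ⟨u, psd_valid_mono hAA hv' hu⟩

end Aux

section Forcer
open ZF Set

set_option linter.unusedSectionVars false

variable {V : Type*} [Fintype V] [DecidableEq V]

/-- First time `x` is blue in the standard process from `B`. -/
noncomputable def tv (G : SimpleGraph V) (B : Set V) (x : V) : ℕ :=
  sInf {k | x ∈ ZF.iter (ZFValid G Set.univ) B k}

open Classical in
/-- Chosen forcer of `x`. -/
noncomputable def fv (G : SimpleGraph V) (B : Set V) (x : V) : V :=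
  if h : ∃ u, ZFValid G Set.univ (ZF.iter (ZFValid G Set.univ) B (tv G B x - 1)) u x
  then h.choose else x

variable {G : SimpleGraph V} {B : Set V} {p : ℕ}
  (hp : Set.univ ⊆ ZF.iter (ZFValid G Set.univ) B p)
include hp

lemma tv_mem (x : V) : x ∈ ZF.iter (ZFValid G Set.univ) B (tv G B x) := by
  have h : {k | x ∈ ZF.iter (ZFValid G Set.univ) B k}.Nonempty := ⟨p, hp (mem_univ x)⟩
  exact Nat.sInf_mem h

lemma tv_le_p (x : V) : tv G B x ≤ p := Nat.sInf_le (hp (mem_univ x))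

omit hp in
lemma mem_iter_of_tv_le {x : V} {k : ℕ} (hx : x ∈ ZF.iter (ZFValid G Set.univ) B (tv G B x))
    (h : tv G B x ≤ k) : x ∈ ZF.iter (ZFValid G Set.univ) B k :=
  iter_mono_time _ _ h hx

lemma mem_iter_iff_tv {x : V} {k : ℕ} :
    x ∈ ZF.iter (ZFValid G Set.univ) B k ↔ tv G B x ≤ k := by
  constructor
  · exact fun h => Nat.sInf_le h
  · exact fun h => mem_iter_of_tv_le (tv_mem hp x) h

lemma tv_eq_zero_iff {x : V} : tv G B x = 0 ↔ x ∈ B := by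
  rw [← Nat.le_zero, ← mem_iter_iff_tv hp, iter_zero']

lemma tv_pos {x : V} (hx : x ∉ B) : 1 ≤ tv G B x := by
  rcases Nat.eq_zero_or_pos (tv G B x) with h | h
  · exact absurd ((tv_eq_zero_iff hp).mp h) hx
  · exact h

lemma fv_spec {x : V} (hx : x ∉ B) :
    ZFValid G Set.univ (ZF.iter (ZFValid G Set.univ) B (tv G B x - 1)) (fv G B x) x := by
  have h1 : 1 ≤ tv G B x := tv_pos hp hx
  have hx1 : x ∈ ZF.iter (ZFValid G Set.univ) B (tv G B x - 1 + 1) := by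
    rw [Nat.sub_add_cancel h1]; exact tv_mem hp x
  have hx2 : x ∉ ZF.iter (ZFValid G Set.univ) B (tv G B x - 1) := by
    intro hmem
    have := (mem_iter_iff_tv hp).mp hmem
    omega
  rw [iter_succ'] at hx1
  rcases hx1 with h | ⟨u, hu⟩
  · exact absurd h hx2
  · have hex : ∃ u, ZFValid G Set.univ (ZF.iter (ZFValid G Set.univ) B (tv G B x - 1)) u x :=
      ⟨u, hu⟩
    rw [fv]
    rw [dif_pos hex]
    exact hex.choose_spec

lemma tv_fv_lt {x : V} (hx : x ∉ B) : tv G B (fv G B x) < tv G B x := by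
  have h := (fv_spec hp hx).2.2.1
  have := (mem_iter_iff_tv hp).mp h
  have h1 := tv_pos hp hx
  omega

lemma fv_adj {x : V} (hx : x ∉ B) : G.Adj (fv G B x) x := (fv_spec hp hx).2.2.2.2.1

/-- The uniqueness clause of the chosen force, in convenient form. -/
lemma fv_uniq {x w : V} (hx : x ∉ B) (hadj : G.Adj (fv G B x) w)
    (hw : w ∉ ZF.iter (ZFValid G Set.univ) B (tv G B x - 1)) : w = x :=
  (fv_spec hp hx).2.2.2.2.2 w (mem_univ w) hadj hw

/-- `fv` is injective on the complement of `B`. -/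
lemma fv_inj {x y : V} (hx : x ∉ B) (hy : y ∉ B) (hxy : fv G B x = fv G B y) : x = y := by
  rcases le_total (tv G B x) (tv G B y) with h | h
  · -- y is white at time tv x - 1
    have hyw : y ∉ ZF.iter (ZFValid G Set.univ) B (tv G B x - 1) := by
      intro hmem
      have := (mem_iter_iff_tv hp).mp hmem
      have h1 := tv_pos hp hy
      omega
    have hadj : G.Adj (fv G B x) y := hxy ▸ fv_adj hp hy
    exact (fv_uniq hp hx hadj hyw).symm
  · have hxw : x ∉ ZF.iter (ZFValid G Set.univ) B (tv G B y - 1) := by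
      intro hmem
      have := (mem_iter_iff_tv hp).mp hmem
      have h1 := tv_pos hp hx
      omega
    have hadj : G.Adj (fv G B y) x := hxy ▸ fv_adj hp hx
    exact fv_uniq hp hy hadj hxw

end Forcer

section Construction
open ZF Set

set_option linter.unusedSectionVars false

variable {V : Type*} [Fintype V] [DecidableEq V]

/-- The snapshot terminus at time `h`: vertices blue by time `h` performing no force
within the first `h` steps. -/
def Bp (G : SimpleGraph V) (B : Set V) (h : ℕ) : Set V :=
  {u | tv G B u ≤ h ∧ ∀ x, x ∉ B → fv G B x = u → ¬ tv G B x ≤ h}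

/-- Blue set of the reversed (truncated) process after `s` reversed steps. -/
def Rset (G : SimpleGraph V) (B : Set V) (h s : ℕ) : Set V :=
  Bp G B h ∪ {u | ∃ x, x ∉ B ∧ fv G B x = u ∧ tv G B x ≤ h ∧ h + 1 ≤ tv G B x + s}

/-- The target blue set after `s` hybrid PSD steps. -/
def Tset (G : SimpleGraph V) (B : Set V) (h s : ℕ) : Set V :=
  Rset G B h s ∪ {x | h + 1 ≤ tv G B x ∧ tv G B x ≤ h + s}

variable {G : SimpleGraph V} {B : Set V} {p : ℕ}
  (hp : Set.univ ⊆ ZF.iter (ZFValid G Set.univ) B p)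
include hp

lemma Rset_tv_le {h s : ℕ} {u : V} (hu : u ∈ Rset G B h s) : tv G B u ≤ h := by
  rcases hu with hu | ⟨x, hx, hfx, hxh, -⟩
  · exact hu.1
  · exact le_of_lt (lt_of_lt_of_le (hfx ▸ tv_fv_lt hp hx) hxh)

omit hp in
lemma Tset_zero {h : ℕ} : Tset G B h 0 = Bp G B h := by
  ext u
  simp only [Tset, Rset, mem_union, mem_setOf_eq]
  constructor
  · rintro ((hu | ⟨x, -, -, hxh, hle⟩) | ⟨hge, hle⟩)
    · exact hu
    · omega
    · omega
  · exact fun hu => Or.inl (Or.inl hu)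

omit hp in
lemma Tset_mono_s {h s : ℕ} : Tset G B h s ⊆ Tset G B h (s + 1) := by
  rintro u ((hu | ⟨x, hx, hfx, hxh, hle⟩) | ⟨hge, hle⟩)
  · exact Or.inl (Or.inl hu)
  · exact Or.inl (Or.inr ⟨x, hx, hfx, hxh, by omega⟩)
  · exact Or.inr ⟨hge, by omega⟩

lemma Tset_full {h : ℕ} (hph : p ≤ 2 * h) : Set.univ ⊆ Tset G B h h := by
  intro u _
  by_cases hu : tv G B u ≤ h
  · by_cases hub : u ∈ Bp G B h
    · exact Or.inl (Or.inl hub)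
    · simp only [Bp, mem_setOf_eq, not_and, not_forall] at hub
      obtain ⟨x, hx, hfx, hxh⟩ := hub hu
      push_neg at hxh
      have h1 : 1 ≤ tv G B x := tv_pos hp hx
      exact Or.inl (Or.inr ⟨x, hx, hfx, hxh, by omega⟩)
  · have := tv_le_p hp u
    exact Or.inr ⟨by omega, by omega⟩

/-- No edge between a non-`Bp` vertex blue by time `h` and a vertex white at time `h`. -/
lemma cross_edge {h : ℕ} {a b : V} (ha1 : tv G B a ≤ h) (ha2 : a ∉ Bp G B h)
    (hb : ¬ tv G B b ≤ h) (hadj : G.Adj a b) : False := by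
  simp only [Bp, mem_setOf_eq, not_and, not_forall] at ha2
  obtain ⟨x, hx, hfx, hxh⟩ := ha2 ha1
  push_neg at hxh
  have h1 : 1 ≤ tv G B x := tv_pos hp hx
  have hbw : b ∉ ZF.iter (ZFValid G Set.univ) B (tv G B x - 1) := by
    intro hmem
    have := (mem_iter_iff_tv hp).mp hmem
    omega
  have := fv_uniq hp hx (hfx ▸ hadj : G.Adj (fv G B x) b) hbw
  subst this
  omega

/-- Whiteness side preservation: a white walk stays on one side of `U₁`. -/
lemma whiteConn_side {h s : ℕ} {v w : V} (hconn : whiteConn G Set.univ (Tset G B h s) v w) :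
    (tv G B v ≤ h ↔ tv G B w ≤ h) := by
  induction hconn with
  | refl => rfl
  | @tail b c hbc hstep ih =>
    obtain ⟨hadj, -, -, hbT, hcT⟩ := hstep
    have hside : (tv G B b ≤ h ↔ tv G B c ≤ h) := by
      constructor
      · intro hbh
        by_contra hch
        exact cross_edge hp hbh (fun hmem => hbT (Or.inl (Or.inl hmem))) hch hadj
      · intro hch
        by_contra hbh
        exact cross_edge hp hch (fun hmem => hcT (Or.inl (Or.inl hmem))) hbh hadj.symm
    exact ih.trans hside

end Construction

section MainStep
open ZF Set

set_option linter.unusedSectionVars false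

variable {V : Type*} [Fintype V] [DecidableEq V]
variable {G : SimpleGraph V} {B : Set V} {p : ℕ}
  (hp : Set.univ ⊆ ZF.iter (ZFValid G Set.univ) B p)
include hp

lemma Tset_step {h s : ℕ} :
    Tset G B h (s + 1) ⊆ ZF.step (PSDValid G Set.univ) (Tset G B h s) := by
  intro v hv
  by_cases hvT : v ∈ Tset G B h s
  · exact Or.inl hvT
  right
  rcases hv with (hv | ⟨x, hx, hfx, hxh, hle⟩) | ⟨hge, hle⟩
  · exact absurd (Or.inl (Or.inl hv)) hvT
  · -- backward force: `v` forces `x` forward at time `tv x = h - s`; `x` PSD-forces `v`.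
    have hxs : tv G B x + s = h := by
      have hnot : v ∉ Rset G B h s := fun hmem => hvT (Or.inl hmem)
      have : ¬ (h + 1 ≤ tv G B x + s) := by
        intro hc
        exact hnot (Or.inr ⟨x, hx, hfx, hxh, hc⟩)
      omega
    have hvx : tv G B v < tv G B x := hfx ▸ tv_fv_lt hp hx
    have hvh : tv G B v ≤ h := by omega
    refine ⟨x, mem_univ x, mem_univ v, ?_, hvT, (hfx ▸ fv_adj hp hx).symm, ?_⟩
    · -- x ∈ Tset s
      by_cases hxB : x ∈ Bp G B h
      · exact Or.inl (Or.inl hxB)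
      · simp only [Bp, mem_setOf_eq, not_and, not_forall] at hxB
        obtain ⟨y, hy, hfy, hyh⟩ := hxB hxh
        push_neg at hyh
        have hxy : tv G B x < tv G B y := hfy ▸ tv_fv_lt hp hy
        exact Or.inl (Or.inr ⟨y, hy, hfy, hyh, by omega⟩)
    · -- uniqueness
      intro w _ hadj hwT hconn
      have hwh : tv G B w ≤ h := (whiteConn_side hp hconn).mp hvh
      have hwBp : w ∉ Bp G B h := fun hmem => hwT (Or.inl (Or.inl hmem))
      simp only [Bp, mem_setOf_eq, not_and, not_forall] at hwBp
      obtain ⟨y, hy, hfy, hyh⟩ := hwBp hwh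
      push_neg at hyh
      have hyR : ¬ (h + 1 ≤ tv G B y + s) := by
        intro hc
        exact hwT (Or.inl (Or.inr ⟨y, hy, hfy, hyh, hc⟩))
      -- so tv y ≤ tv x, hence x is white when y is forced (by w), so x = y
      have h1 : 1 ≤ tv G B y := tv_pos hp hy
      have hxw : x ∉ ZF.iter (ZFValid G Set.univ) B (tv G B y - 1) := by
        intro hmem
        have := (mem_iter_iff_tv hp).mp hmem
        omega
      have hxy : x = y := fv_uniq hp hy (hfy ▸ hadj.symm : G.Adj (fv G B y) x) hxw
      rw [← hfy, ← hxy, hfx]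
  · -- forward force at time `h + s + 1`.
    have hvt : tv G B v = h + s + 1 := by
      have : ¬ (h + 1 ≤ tv G B v ∧ tv G B v ≤ h + s) := fun hc => hvT (Or.inr hc)
      omega
    have hvB : v ∉ B := by
      intro hvB
      have := (tv_eq_zero_iff hp).mpr hvB
      omega
    refine ⟨fv G B v, mem_univ _, mem_univ v, ?_, hvT, fv_adj hp hvB, ?_⟩
    · -- fv v ∈ Tset s
      have hfvt : tv G B (fv G B v) < tv G B v := tv_fv_lt hp hvB
      by_cases hfh : tv G B (fv G B v) ≤ h
      · -- fv v ∈ Bp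
        refine Or.inl (Or.inl ⟨hfh, ?_⟩)
        intro x hxB hfxv hxh
        have hxv : x = v := fv_inj hp hxB hvB (hfxv.trans rfl)
        rw [hxv] at hxh
        omega
      · exact Or.inr ⟨by omega, by omega⟩
    · -- uniqueness
      intro w _ hadj hwT hconn
      have hwh : ¬ tv G B w ≤ h := by
        intro hwh
        have := (whiteConn_side hp hconn).mpr hwh
        omega
      have hwfut : ¬ (h + 1 ≤ tv G B w ∧ tv G B w ≤ h + s) := fun hc => hwT (Or.inr hc)
      have hww : w ∉ ZF.iter (ZFValid G Set.univ) B (tv G B v - 1) := by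
        intro hmem
        have := (mem_iter_iff_tv hp).mp hmem
        omega
      exact fv_uniq hp hvB hadj hww

end MainStep

section KeyLemma
open ZF Set

set_option linter.unusedSectionVars false

variable {V : Type*} [Fintype V] [DecidableEq V]
variable {G : SimpleGraph V} {B : Set V} {p : ℕ}
  (hp : Set.univ ⊆ ZF.iter (ZFValid G Set.univ) B p)
include hp

lemma Bp_ncard (h : ℕ) : (Bp G B h).ncard = B.ncard := by
  classical
  set U1 : Set V := {u | tv G B u ≤ h} with hU1
  have hBU : B ⊆ U1 := by
    intro b hb
    have : tv G B b = 0 := (tv_eq_zero_iff hp).mpr hb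
    simp [hU1, this]
  have hBpU : Bp G B h ⊆ U1 := fun u hu => hu.1
  have himg : fv G B '' (U1 \ B) = U1 \ Bp G B h := by
    ext u
    constructor
    · rintro ⟨x, ⟨hxU, hxB⟩, rfl⟩
      have hlt : tv G B (fv G B x) < tv G B x := tv_fv_lt hp hxB
      have hxh : tv G B x ≤ h := hxU
      refine ⟨by simp only [hU1, mem_setOf_eq]; omega, ?_⟩
      intro hmem
      exact hmem.2 x hxB rfl hxh
    · rintro ⟨hxU, hxBp⟩
      have hxh : tv G B u ≤ h := hxU
      simp only [Bp, mem_setOf_eq, not_and, not_forall] at hxBp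
      obtain ⟨x, hx, hfx, hxh'⟩ := hxBp hxh
      push_neg at hxh'
      exact ⟨x, ⟨hxh', hx⟩, hfx⟩
  have hinj : Set.InjOn (fv G B) (U1 \ B) :=
    fun x hx y hy hxy => fv_inj hp hx.2 hy.2 hxy
  have h1 : (U1 \ B).ncard = (U1 \ Bp G B h).ncard := by
    rw [← himg, Set.ncard_image_of_injOn hinj]
  have h2 : (U1 \ B).ncard = U1.ncard - B.ncard := Set.ncard_diff hBU (Set.toFinite B)
  have h3 : (U1 \ Bp G B h).ncard = U1.ncard - (Bp G B h).ncard :=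
    Set.ncard_diff hBpU (Set.toFinite _)
  have h4 : B.ncard ≤ U1.ncard := Set.ncard_le_ncard hBU (Set.toFinite U1)
  have h5 : (Bp G B h).ncard ≤ U1.ncard := Set.ncard_le_ncard hBpU (Set.toFinite U1)
  omega

lemma exists_psd :
    ∃ B' : Set V, B'.ncard = B.ncard ∧
      IsForcingSet (PSDValid G Set.univ) Set.univ B' ∧
      propTime (PSDValid G Set.univ) Set.univ B' ≤ (p + 1) / 2 := by
  set h := (p + 1) / 2 with hh
  refine ⟨Bp G B h, Bp_ncard hp h, ?_, ?_⟩
  all_goals {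
    have hTiter : ∀ s, Tset G B h s ⊆ ZF.iter (PSDValid G Set.univ) (Bp G B h) s := by
      intro s
      induction s with
      | zero => rw [Tset_zero, iter_zero']
      | succ n ih =>
        rw [iter_succ']
        exact (Tset_step hp).trans ((psd_step_mono ih))
    have hfull : Set.univ ⊆ ZF.iter (PSDValid G Set.univ) (Bp G B h) h :=
      (Tset_full hp (by omega)).trans (hTiter h)
    first
      | exact ⟨Set.subset_univ _, h, hfull⟩
      | exact Nat.sInf_le hfull
  }

end KeyLemma

/-- For any graph `G` and `m ≥ Z(G)`, `pt₊(G,m) ≤ ⌈pt(G,m)/2⌉`. -/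
theorem ptplusm_le {V : Type*} [Fintype V] [DecidableEq V] (G : SimpleGraph V)
    (m : ℕ) (hm : ZF.Z G ≤ m) :
    ZF.ptplusm G m ≤ (ZF.ptm G m + 1) / 2 := by
  classical
  open ZF in
  set SZ : Set ℕ := {t | ∃ B : Set V, B.ncard = m ∧
    IsForcingSet (ZFValid G Set.univ) Set.univ B ∧
    propTime (ZFValid G Set.univ) Set.univ B = t} with hSZdef
  have hptm : ZF.ptm G m = sInf SZ := rfl
  by_cases hSZ : SZ.Nonempty
  · obtain ⟨B, hcard, hforce, hptB⟩ := Nat.sInf_mem hSZ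
    have hpf : Set.univ ⊆ ZF.iter (ZF.ZFValid G Set.univ) B
        (ZF.propTime (ZF.ZFValid G Set.univ) Set.univ B) := by
      have hne : {k | Set.univ ⊆ ZF.iter (ZF.ZFValid G Set.univ) B k}.Nonempty := hforce.2
      exact Nat.sInf_mem hne
    obtain ⟨B', hc', hf', hle'⟩ := exists_psd hpf
    have hmem : ZF.propTime (ZF.PSDValid G Set.univ) Set.univ B' ∈
        {t | ∃ B'' : Set V, B''.ncard = m ∧
          ZF.IsForcingSet (ZF.PSDValid G Set.univ) Set.univ B'' ∧
          ZF.propTime (ZF.PSDValid G Set.univ) Set.univ B'' = t} :=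
      ⟨B', hc'.trans hcard, hf', rfl⟩
    have h1 : ZF.ptplusm G m ≤ ZF.propTime (ZF.PSDValid G Set.univ) Set.univ B' :=
      Nat.sInf_le hmem
    have h2 : ZF.ptm G m = ZF.propTime (ZF.ZFValid G Set.univ) Set.univ B := by
      rw [hptm, hptB]
    omega
  · -- `SZ` empty: then `m` exceeds the number of vertices, so both sides vanish.
    have hcV : ¬ m ≤ Fintype.card V := by
      intro hmV
      apply hSZ
      -- the zero forcing number is attained
      have hZne : {n | ∃ B : Set V, B.ncard = n ∧
          ZF.IsForcingSet (ZF.ZFValid G Set.univ) Set.univ B}.Nonempty := by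
        refine ⟨Fintype.card V, Set.univ, ?_, Set.subset_univ _, 0, subset_of_eq rfl⟩
        rw [Set.ncard_univ, Nat.card_eq_fintype_card]
      obtain ⟨B₀, hB₀card, hB₀force⟩ := Nat.sInf_mem hZne
      have hB₀m : B₀.ncard ≤ m := by rw [hB₀card]; exact hm
      have hextend : ∃ B₁ : Set V, B₀ ⊆ B₁ ∧ B₁ ⊆ Set.univ ∧ B₁.ncard = m := by
        refine Set.exists_subsuperset_card_eq (Set.subset_univ B₀) hB₀m ?_
        rw [Set.ncard_univ, Nat.card_eq_fintype_card]
        exact hmV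
      obtain ⟨B₁, hB₀B₁, -, hB₁card⟩ := hextend
      obtain ⟨-, k, hk⟩ := hB₀force
      have hforce₁ : ZF.IsForcingSet (ZF.ZFValid G Set.univ) Set.univ B₁ :=
        ⟨Set.subset_univ _, k, hk.trans (zf_iter_mono hB₀B₁ k)⟩
      exact ⟨_, B₁, hB₁card, hforce₁, rfl⟩
    have hSP : {t | ∃ B'' : Set V, B''.ncard = m ∧
        ZF.IsForcingSet (ZF.PSDValid G Set.univ) Set.univ B'' ∧
        ZF.propTime (ZF.PSDValid G Set.univ) Set.univ B'' = t} = ∅ := by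
      ext t
      simp only [Set.mem_setOf_eq, Set.mem_empty_iff_false, iff_false]
      rintro ⟨B'', hB''card, -, -⟩
      apply hcV
      rw [← hB''card]
      have := Set.ncard_le_ncard (Set.subset_univ B'') (Set.toFinite _)
      rwa [Set.ncard_univ, Nat.card_eq_fintype_card] at this
    have : ZF.ptplusm G m = 0 := by
      rw [ZF.ptplusm, hSP, Nat.sInf_empty]
    omega
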